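/- arXiv:1004.1365 — 4 statements merged into one kernel-verified Lean document; each statement's English description precedes it below -/
import Mathlib

section
/- Let X be a topological space and let Y be a complete Hausdorff topological vector space over ℝ. If Φ is a nontrivial (NeBot) filter on the space C(X,Y) of continuous maps from X to Y that is continuously Cauchy at every point of X, then there exists a continuous map f : X → Y such that Φ converges continuously to f. (This is the paper's Theorem 1 — completeness of C_c(X,Y) — stated for topological X: every continuously Cauchy filter has a continuous-convergence limit in C(X,Y).) -/
open Filter Topology UniformSpace

/-- Theorem 1: if `Y` is a complete Hausdorff topological vector space over `ℝ`
(with its canonical uniform structure), then every continuously Cauchy filter on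
`C(X, Y)` converges continuously to some continuous map `f : X → Y`. -/
theorem completeness_of_Cc_tvs
    {X : Type*} [TopologicalSpace X]
    {Y : Type*} [AddCommGroup Y] [Module ℝ Y] [UniformSpace Y] [IsUniformAddGroup Y]
    [ContinuousSMul ℝ Y] [CompleteSpace Y] [T2Space Y]
    (Φ : Filter C(X, Y)) [Φ.NeBot]
    (hΦ : ∀ x : X,
      Filter.map (fun p : X × (C(X, Y) × C(X, Y)) => p.2.1 p.1 - p.2.2 p.1)
        (nhds x ×ˢ (Φ ×ˢ Φ)) ≤ nhds 0) :
    ∃ f : C(X, Y), ∀ x : X,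
      Filter.map (fun p : X × C(X, Y) => p.2 p.1) (nhds x ×ˢ Φ) ≤ nhds (f x) := by
  have hNe : Nonempty Y := ⟨0⟩
  -- pointwise Cauchy-ness
  have hpt : ∀ x : X, Filter.Tendsto (fun q : C(X, Y) × C(X, Y) => q.1 x - q.2 x)
      (Φ ×ˢ Φ) (nhds 0) := by
    intro x
    have h1 : Filter.Tendsto (fun p : X × (C(X, Y) × C(X, Y)) => p.2.1 p.1 - p.2.2 p.1)
        (nhds x ×ˢ (Φ ×ˢ Φ)) (nhds 0) := hΦ x
    have h2 : Filter.Tendsto (fun q : C(X, Y) × C(X, Y) => ((x, q) : X × (C(X, Y) × C(X, Y))))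
        (Φ ×ˢ Φ) (nhds x ×ˢ (Φ ×ˢ Φ)) :=
      Filter.Tendsto.prodMk tendsto_const_nhds tendsto_id
    exact h1.comp h2
  have hCauchy : ∀ x : X, Cauchy (Φ.map (fun g : C(X, Y) => g x)) := by
    intro x
    refine ⟨Filter.NeBot.map ‹_› _, ?_⟩
    rw [uniformity_eq_comap_nhds_zero Y, ← Filter.map_le_iff_le_comap,
      Filter.prod_map_map_eq, Filter.map_map]
    have h := (hpt x).neg
    rw [neg_zero] at h
    refine le_trans (le_of_eq ?_) h
    congr 1
    funext q
    simp
  -- pointwise limit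
  set f₀ : X → Y := fun x => lim (Φ.map (fun g : C(X, Y) => g x)) with hf₀def
  have hf₀ : ∀ x : X, Filter.Tendsto (fun g : C(X, Y) => g x) Φ (nhds (f₀ x)) := by
    intro x
    exact (hCauchy x).le_nhds_lim
  -- equicontinuity
  have equi : ∀ x : X, Filter.Tendsto (fun q : X × C(X, Y) => q.2 q.1 - q.2 x)
      (nhds x ×ˢ Φ) (nhds 0) := by
    intro x
    intro U hU
    rw [Filter.mem_map]
    obtain ⟨V, hV, hVU⟩ := exists_nhds_zero_quarter hU
    -- shrink to a V that also works for negation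
    set V' : Set Y := V ∩ (fun y => -y) ⁻¹' V with hV'def
    have hV' : V' ∈ nhds (0 : Y) := by
      refine Filter.inter_mem hV ?_
      have : Filter.Tendsto (fun y : Y => -y) (nhds 0) (nhds 0) := by
        simpa using (continuous_neg.tendsto (0 : Y))
      exact this hV
    have hmem := hΦ x (hV' : V' ∈ nhds (0 : Y))
    rw [Filter.mem_map, Filter.mem_prod_iff] at hmem
    obtain ⟨A, hA, T, hT, hAT⟩ := hmem
    rw [Filter.mem_prod_iff] at hT
    obtain ⟨S₁, hS₁, S₂, hS₂, hS⟩ := hT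
    have hSmem : S₁ ∩ S₂ ∈ Φ := Filter.inter_mem hS₁ hS₂
    obtain ⟨h₀, hh₀⟩ := Filter.nonempty_of_mem hSmem
    have hB : {p : X | h₀ p - h₀ x ∈ V} ∈ nhds x := by
      have : Filter.Tendsto (fun p : X => h₀ p - h₀ x) (nhds x) (nhds 0) := by
        have := (h₀.continuous.tendsto x).sub_const (h₀ x)
        simpa using this
      exact this hV
    refine Filter.mem_of_superset
      (Filter.prod_mem_prod (Filter.inter_mem hA hB) hSmem) ?_
    rintro ⟨p, g⟩ ⟨⟨hpA, hpB⟩, hgS⟩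
    have hx : x ∈ A := mem_of_mem_nhds hA
    have key : ∀ q ∈ A, ∀ g' ∈ S₁ ∩ S₂, g' q - h₀ q ∈ V' := by
      intro q hq g' hg'
      exact hAT (Set.mk_mem_prod hq (hS (Set.mk_mem_prod hg'.1 hh₀.2)))
    have t1 : g p - h₀ p ∈ V := (key p hpA g hgS).1
    have t2 : h₀ p - h₀ x ∈ V := hpB
    have t3 : h₀ x - g x ∈ V := by
      have := (key x hx g hgS).2
      simpa using this
    have : (g p - h₀ p) + (h₀ p - h₀ x) + (h₀ x - g x) + 0 ∈ U :=
      hVU t1 t2 t3 (mem_of_mem_nhds hV)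
    simpa only [Set.mem_preimage, add_zero, sub_add_sub_cancel] using this
  -- continuous convergence to f₀
  have conv : ∀ x : X, Filter.Tendsto (fun q : X × C(X, Y) => q.2 q.1)
      (nhds x ×ˢ Φ) (nhds (f₀ x)) := by
    intro x
    have t1 : Filter.Tendsto (fun q : X × C(X, Y) => q.2 x - f₀ x) (nhds x ×ˢ Φ)
        (nhds 0) := by
      have h := (hf₀ x).sub_const (f₀ x)
      simp only [sub_self] at h
      exact h.comp tendsto_snd
    have h2 := (equi x).add t1
    simp only [add_zero, sub_add_sub_cancel] at h2
    have h3 := h2.add_const (f₀ x)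
    simpa using h3
  -- continuity of f₀
  have hcont : Continuous f₀ := by
    rw [continuous_iff_continuousAt]
    intro x
    rw [ContinuousAt, Uniform.tendsto_nhds_right]
    intro V hV
    rw [Filter.mem_map]
    obtain ⟨W, ⟨hWu, hWc⟩, hWV⟩ := (uniformity_hasBasis_closed (α := Y)).mem_iff.mp hV
    have hmem : {y : Y | (f₀ x, y) ∈ W} ∈ nhds (f₀ x) := UniformSpace.ball_mem_nhds _ hWu
    have := conv x hmem
    rw [Filter.mem_map, Filter.mem_prod_iff] at this
    obtain ⟨A, hA, S, hS, hAS⟩ := this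
    refine Filter.mem_of_superset hA ?_
    intro x' hx'
    have hK : IsClosed {y : Y | (f₀ x, y) ∈ W} := hWc.preimage (Continuous.prodMk_right _)
    have hmem2 : ∀ᶠ g in Φ, g x' ∈ {y : Y | (f₀ x, y) ∈ W} :=
      Filter.mem_of_superset hS (fun g hg => hAS (Set.mk_mem_prod hx' hg))
    have : f₀ x' ∈ closure {y : Y | (f₀ x, y) ∈ W} :=
      mem_closure_of_tendsto (hf₀ x') hmem2
    rw [hK.closure_eq] at this
    exact hWV this
  exact ⟨⟨f₀, hcont⟩, fun x => conv x⟩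
end

section
/- Let X be a topological space and let Y be a complete Hausdorff commutative topological additive group. If Φ is a nontrivial (NeBot) filter on the space C(X,Y) of continuous maps from X to Y that is continuously Cauchy at every point of X, then there exists a continuous map f : X → Y such that Φ converges continuously to f. (This is the paper's Theorem 2 — completeness of the convergence group C_c(X,Y) — stated for topological X.) -/
open Filter Topology

/-- Theorem 2: if `Y` is a complete Hausdorff commutative topological additive group
(with its canonical uniform structure), then every continuously Cauchy filter on
`C(X, Y)` converges continuously to some continuous map `f : X → Y`. -/
theorem completeness_of_Cc_group
    {X : Type*} [TopologicalSpace X]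
    {Y : Type*} [AddCommGroup Y] [UniformSpace Y] [IsUniformAddGroup Y]
    [CompleteSpace Y] [T2Space Y]
    (Φ : Filter C(X, Y)) [Φ.NeBot]
    (hΦ : ∀ x : X,
      Filter.map (fun p : X × (C(X, Y) × C(X, Y)) => p.2.1 p.1 - p.2.2 p.1)
        (nhds x ×ˢ (Φ ×ˢ Φ)) ≤ nhds 0) :
    ∃ f : C(X, Y), ∀ x : X,
      Filter.map (fun p : X × C(X, Y) => p.2 p.1) (nhds x ×ˢ Φ) ≤ nhds (f x) := by
  classical
  -- set-level consequence of the continuous Cauchy condition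
  have key : ∀ x : X, ∀ V ∈ nhds (0 : Y), ∃ U ∈ nhds x, ∃ S ∈ Φ,
      ∀ p ∈ U, ∀ g ∈ S, ∀ h ∈ S, g p - h p ∈ V := by
    intro x V hV
    have hmem := hΦ x hV
    rw [Filter.mem_map] at hmem
    rcases Filter.mem_prod_iff.mp hmem with ⟨U, hU, T, hT, hUT⟩
    rcases Filter.mem_prod_iff.mp hT with ⟨S₁, hS₁, S₂, hS₂, hST⟩
    refine ⟨U, hU, S₁ ∩ S₂, Filter.inter_mem hS₁ hS₂, ?_⟩
    intro p hp g hg h hh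
    exact hUT (Set.mk_mem_prod hp (hST (Set.mk_mem_prod hg.1 hh.2)))
  -- pointwise limits
  have hlim : ∀ x : X, ∃ y : Y, Tendsto (fun g : C(X, Y) => g x) Φ (nhds y) := by
    intro x
    have hc : Cauchy (Φ.map (fun g : C(X, Y) => g x)) := by
      constructor
      · exact Filter.map_neBot
      · rw [uniformity_eq_comap_nhds_zero Y, Filter.prod_map_map_eq,
          ← Filter.map_le_iff_le_comap]
        intro V hV
        rcases key x V hV with ⟨U, hU, S, hS, hUS⟩
        rw [Filter.mem_map, Filter.mem_map]
        refine Filter.mem_of_superset (Filter.prod_mem_prod hS hS) ?_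
        rintro ⟨g, h⟩ ⟨hg, hh⟩
        exact hUS x (mem_of_mem_nhds hU) h hh g hg
    exact CompleteSpace.complete hc
  set f₀ : X → Y := fun x => (hlim x).choose with hf₀def
  have hf₀ : ∀ x : X, Tendsto (fun g : C(X, Y) => g x) Φ (nhds (f₀ x)) :=
    fun x => (hlim x).choose_spec
  -- equicontinuity
  have equi : ∀ x : X, ∀ W ∈ nhds (0 : Y), ∃ U ∈ nhds x, ∃ S ∈ Φ,
      ∀ p ∈ U, ∀ h ∈ S, h p - h x ∈ W := by
    intro x W hW
    rcases exists_nhds_zero_half hW with ⟨V₁, hV₁, hV₁W⟩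
    rcases exists_nhds_zero_half hV₁ with ⟨V₂, hV₂, hV₂V₁⟩
    have hV : V₁ ∩ V₂ ∈ nhds (0 : Y) := Filter.inter_mem hV₁ hV₂
    rcases key x (V₁ ∩ V₂) hV with ⟨U, hU, S, hS, hUS⟩
    obtain ⟨g₀, hg₀⟩ := Filter.nonempty_of_mem hS
    have hU' : {p : X | g₀ p - g₀ x ∈ V₁ ∩ V₂} ∈ nhds x := by
      have h2 : Tendsto (fun p => g₀ p - g₀ x) (nhds x) (nhds 0) := by
        simpa using (g₀.continuous.tendsto x).sub_const (g₀ x)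
      exact h2 hV
    refine ⟨U ∩ {p | g₀ p - g₀ x ∈ V₁ ∩ V₂}, Filter.inter_mem hU hU', S, hS, ?_⟩
    intro p hp h hh
    have e1 : h p - g₀ p ∈ V₁ ∩ V₂ := hUS p hp.1 h hh g₀ hg₀
    have e2 : g₀ p - g₀ x ∈ V₁ ∩ V₂ := hp.2
    have e3 : g₀ x - h x ∈ V₁ ∩ V₂ := hUS x (mem_of_mem_nhds hU) g₀ hg₀ h hh
    have hsum : (h p - g₀ p) + ((g₀ p - g₀ x) + (g₀ x - h x)) ∈ W :=
      hV₁W _ e1.1 _ (hV₂V₁ _ e2.2 _ e3.2)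
    rw [sub_add_sub_cancel, sub_add_sub_cancel] at hsum
    exact hsum
  -- filter-level equicontinuity
  have equiT : ∀ x : X,
      Tendsto (fun q : X × C(X, Y) => q.2 q.1 - q.2 x) (nhds x ×ˢ Φ) (nhds 0) := by
    intro x W hW
    rcases equi x W hW with ⟨U, hU, S, hS, hUS⟩
    rw [Filter.mem_map]
    refine Filter.mem_of_superset (Filter.prod_mem_prod hU hS) ?_
    rintro ⟨p, h⟩ ⟨hp, hh⟩
    exact hUS p hp h hh
  -- continuity of the limit function
  have hf₀cont : Continuous f₀ := by
    rw [continuous_iff_continuousAt]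
    intro x
    have hsub : Tendsto (fun p => f₀ p - f₀ x) (nhds x) (nhds 0) := by
      rw [(closed_nhds_basis (0 : Y)).tendsto_right_iff]
      rintro W ⟨hW, hWc⟩
      rcases equi x W hW with ⟨U, hU, S, hS, hUS⟩
      filter_upwards [hU] with p hp
      have hT : Tendsto (fun g : C(X, Y) => g p - g x) Φ (nhds (f₀ p - f₀ x)) :=
        (hf₀ p).sub (hf₀ x)
      exact hWc.mem_of_tendsto hT
        (Filter.mem_of_superset hS (fun h hh => hUS p hp h hh))
    have := hsub.add_const (f₀ x)
    exact (by simpa using this : Tendsto f₀ (nhds x) (nhds (f₀ x)))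
  refine ⟨⟨f₀, hf₀cont⟩, fun x => ?_⟩
  have h1 : Tendsto (fun q : X × C(X, Y) => q.2 x) (nhds x ×ˢ Φ) (nhds (f₀ x)) :=
    (hf₀ x).comp tendsto_snd
  have h2 := (equiT x).add h1
  exact (by simpa using h2 : Tendsto (fun p : X × C(X, Y) => p.2 p.1) (nhds x ×ˢ Φ) (nhds (f₀ x)))
end

section
/- Let X and Y be topological vector spaces over ℝ, with Y complete and Hausdorff. If Φ is a nontrivial (NeBot) filter on the space of continuous linear maps X →L[ℝ] Y that is continuously Cauchy at every point of X (with respect to the evaluation of continuous linear maps), then there exists a continuous linear map g : X →L[ℝ] Y such that Φ converges continuously to g, i.e. for every x ∈ X the pushforward of 𝓝(x) ×ˢ Φ under the map (p, T) ↦ T p converges to g x in Y. (This is the paper's Corollary — completeness of L_c(X,Y) when Y is a complete Hausdorff topological vector space — stated for topological X.) -/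
/-- Corollary: if `X` and `Y` are topological vector spaces over `ℝ` with `Y`
complete and Hausdorff, then every continuously Cauchy filter on `X →L[ℝ] Y`
converges continuously to some continuous linear map `g : X →L[ℝ] Y`. -/
theorem completeness_of_Lc
    {X : Type*} [AddCommGroup X] [Module ℝ X] [TopologicalSpace X]
    [IsTopologicalAddGroup X] [ContinuousSMul ℝ X]
    {Y : Type*} [AddCommGroup Y] [Module ℝ Y] [UniformSpace Y] [IsUniformAddGroup Y]
    [ContinuousSMul ℝ Y] [CompleteSpace Y] [T2Space Y]
    (Φ : Filter (X →L[ℝ] Y)) [Φ.NeBot]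
    (hΦ : ∀ x : X,
      Filter.map (fun p : X × ((X →L[ℝ] Y) × (X →L[ℝ] Y)) => p.2.1 p.1 - p.2.2 p.1)
        (nhds x ×ˢ (Φ ×ˢ Φ)) ≤ nhds 0) :
    ∃ g : X →L[ℝ] Y, ∀ x : X,
      Filter.map (fun p : X × (X →L[ℝ] Y) => p.2 p.1) (nhds x ×ˢ Φ) ≤ nhds (g x) := by
  classical
  -- pointwise limits exist
  have key : ∀ x : X, ∃ y : Y,
      Filter.Tendsto (fun T : X →L[ℝ] Y => T x) Φ (nhds y) := by
    intro x
    have hx : Filter.Tendsto (fun q : (X →L[ℝ] Y) × (X →L[ℝ] Y) => (x, q))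
        (Φ ×ˢ Φ) (nhds x ×ˢ (Φ ×ˢ Φ)) :=
      Filter.Tendsto.prodMk tendsto_const_nhds Filter.tendsto_id
    have h1 : Filter.Tendsto (fun q : (X →L[ℝ] Y) × (X →L[ℝ] Y) => q.1 x - q.2 x)
        (Φ ×ˢ Φ) (nhds 0) := Filter.Tendsto.comp (hΦ x) hx
    have h2 : Filter.Tendsto (fun q : (X →L[ℝ] Y) × (X →L[ℝ] Y) => q.2 x - q.1 x)
        (Φ ×ˢ Φ) (nhds 0) := by
      have := h1.neg
      simpa [neg_sub] using this
    have hc : Cauchy (Φ.map fun T : X →L[ℝ] Y => T x) := by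
      refine ⟨Filter.map_neBot, ?_⟩
      rw [uniformity_eq_comap_nhds_zero Y, ← Filter.map_le_iff_le_comap,
        Filter.prod_map_map_eq, Filter.map_map]
      exact h2
    exact CompleteSpace.complete hc
  choose f hf using key
  -- key uniform estimate: approximation by elements of the filter on a neighborhood
  have est : ∀ (x : X) (V : Set Y), V ∈ nhds (0 : Y) → IsClosed V →
      ∃ U ∈ nhds x, ∃ A ∈ Φ, ∀ p ∈ U, ∀ S ∈ A, S p - f p ∈ V := by
    intro x V hV hVc
    have h := hΦ x hV
    rw [Filter.mem_map, Filter.mem_prod_iff] at h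
    obtain ⟨U, hU, B, hB, hUB⟩ := h
    rw [Filter.mem_prod_iff] at hB
    obtain ⟨A₁, hA₁, A₂, hA₂, hA⟩ := hB
    refine ⟨U, hU, A₁ ∩ A₂, Filter.inter_mem hA₁ hA₂, ?_⟩
    intro p hp S hS
    have hmem : ∀ᶠ T in Φ, S p - T p ∈ V := by
      filter_upwards [Filter.inter_mem hA₁ hA₂] with T hT
      exact hUB (Set.mk_mem_prod hp (hA (Set.mk_mem_prod hS.1 hT.2)))
    have htend : Filter.Tendsto (fun T : X →L[ℝ] Y => S p - T p) Φ (nhds (S p - f p)) :=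
      Filter.Tendsto.const_sub _ (hf p)
    exact hVc.mem_of_tendsto htend hmem
  -- closed symmetric neighborhoods of 0 form a basis
  have hsym : ∀ V ∈ nhds (0 : Y), ∃ W ∈ nhds (0 : Y),
      IsClosed W ∧ (∀ y ∈ W, -y ∈ W) ∧ W ⊆ V := by
    intro V hV
    obtain ⟨W₀, ⟨hW₀, hW₀c⟩, hW₀V⟩ := (closed_nhds_basis (0 : Y)).mem_iff.mp hV
    have hnegW₀ : (fun y : Y => -y) ⁻¹' W₀ ∈ nhds (0 : Y) := by
      have := continuous_neg.tendsto (0 : Y)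
      rw [neg_zero] at this
      exact this hW₀
    refine ⟨W₀ ∩ (fun y : Y => -y) ⁻¹' W₀, Filter.inter_mem hW₀ hnegW₀,
      hW₀c.inter (hW₀c.preimage continuous_neg), ?_, fun y hy => hW₀V hy.1⟩
    intro y hy
    exact ⟨hy.2, by simpa using hy.1⟩
  have hV₂sub : ∀ V₂ ∈ nhds (0 : Y), ∀ V₁, (∀ v ∈ V₂, ∀ w ∈ V₂, v + w ∈ V₁) → V₂ ⊆ V₁ := by
    intro V₂ hV₂ V₁ h v hv
    simpa using h v hv 0 (mem_of_mem_nhds hV₂)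
  -- continuity of f
  have hfc : Continuous f := by
    rw [continuous_iff_continuousAt]
    intro x
    unfold ContinuousAt
    rw [← tendsto_sub_nhds_zero_iff, Filter.tendsto_def]
    intro V hV
    obtain ⟨V₁, hV₁, hV₁V⟩ := exists_nhds_zero_half hV
    obtain ⟨V₂, hV₂, hV₂V₁⟩ := exists_nhds_zero_half hV₁
    obtain ⟨W, hW, hWc, hWsym, hWV₂⟩ := hsym V₂ hV₂
    obtain ⟨U, hU, A, hA, hUA⟩ := est x W hW hWc
    obtain ⟨S₀, hS₀⟩ := Filter.nonempty_of_mem hA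
    have hx : x ∈ U := mem_of_mem_nhds hU
    have hcont : ∀ᶠ p in nhds x, S₀ p - S₀ x ∈ V₂ := by
      have h := ((S₀.continuous.tendsto x).sub (tendsto_const_nhds (x := S₀ x)))
      rw [sub_self] at h
      exact h hV₂
    filter_upwards [hU, hcont] with p hpU hpc
    have t1 : -(S₀ p - f p) ∈ V₂ := hWV₂ (hWsym _ (hUA p hpU S₀ hS₀))
    have t3 : S₀ x - f x ∈ V₁ :=
      hV₂sub V₂ hV₂ V₁ hV₂V₁ (hWV₂ (hUA x hx S₀ hS₀))
    have h12 : -(S₀ p - f p) + (S₀ p - S₀ x) ∈ V₁ := hV₂V₁ _ t1 _ hpc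
    have hsum : -(S₀ p - f p) + (S₀ p - S₀ x) + (S₀ x - f x) ∈ V := hV₁V _ h12 _ t3
    show f p - f x ∈ V
    have heq : f p - f x = -(S₀ p - f p) + (S₀ p - S₀ x) + (S₀ x - f x) := by abel
    rw [heq]; exact hsum
  -- linearity
  have hadd : ∀ a b : X, f (a + b) = f a + f b := by
    intro a b
    refine tendsto_nhds_unique (hf (a + b)) ?_
    exact ((hf a).add (hf b)).congr fun T => (map_add T a b).symm
  have hsmul : ∀ (c : ℝ) (a : X), f (c • a) = c • f a := by
    intro c a
    refine tendsto_nhds_unique (hf (c • a)) ?_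
    exact ((hf a).const_smul c).congr fun T => (map_smul T c a).symm
  refine ⟨⟨⟨⟨f, hadd⟩, fun c a => by simpa using hsmul c a⟩, hfc⟩, ?_⟩
  -- continuous convergence
  intro x
  show Filter.Tendsto (fun p : X × (X →L[ℝ] Y) => p.2 p.1) (nhds x ×ˢ Φ) (nhds (f x))
  rw [← tendsto_sub_nhds_zero_iff, Filter.tendsto_def]
  intro V hV
  obtain ⟨V₁, hV₁, hV₁V⟩ := exists_nhds_zero_half hV
  obtain ⟨W, hW, hWc, _, hWV₁⟩ := hsym V₁ hV₁
  obtain ⟨U, hU, A, hA, hUA⟩ := est x W hW hWc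
  have hcont : ∀ᶠ p in nhds x, f p - f x ∈ V₁ := by
    have h := ((hfc.tendsto x).sub (tendsto_const_nhds (x := f x)))
    rw [sub_self] at h
    exact h hV₁
  have hU' : U ∩ {p : X | f p - f x ∈ V₁} ∈ nhds x :=
    Filter.inter_mem hU hcont
  refine Filter.mem_of_superset (Filter.prod_mem_prod hU' hA) ?_
  rintro ⟨p, T⟩ ⟨⟨hpU, hpf⟩, hT⟩
  have h1 : T p - f p ∈ V₁ := hWV₁ (hUA p hpU T hT)
  have hsum : (T p - f p) + (f p - f x) ∈ V := hV₁V _ h1 _ hpf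
  show T p - f x ∈ V
  have heq : T p - f x = (T p - f p) + (f p - f x) := by abel
  rw [heq]; exact hsum
end

section
/- Let X be a topological space, let Y be a Hausdorff commutative topological additive group, and let Φ be a nontrivial (NeBot) filter on the space C(X,Y) of continuous maps from X to Y that is continuously Cauchy at every point of X. Suppose f : X → Y is a continuous map such that for every x ∈ X the pushforward of Φ under the evaluation map g ↦ g x converges to f x in Y. Then Φ converges continuously to f: for every x ∈ X, the pushforward of 𝓝(x) ×ˢ Φ under the evaluation map (p, g) ↦ g p converges to f x in Y. -/
open Topology Filter


/-- If a continuously Cauchy filter on `C(X, Y)`, with `Y` a Hausdorff commutative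
topological additive group, converges pointwise to a continuous map `f`, then it
converges continuously to `f`. -/
theorem pointwise_limit_continuous_convergence
    {X : Type*} [TopologicalSpace X]
    {Y : Type*} [AddCommGroup Y] [TopologicalSpace Y] [IsTopologicalAddGroup Y] [T2Space Y]
    (Φ : Filter C(X, Y)) [Φ.NeBot]
    (hΦ : ∀ x : X,
      Filter.map (fun p : X × (C(X, Y) × C(X, Y)) => p.2.1 p.1 - p.2.2 p.1)
        (nhds x ×ˢ (Φ ×ˢ Φ)) ≤ nhds 0)
    (f : X → Y) (hf : Continuous f)
    (hlim : ∀ x : X, Filter.map (fun g : C(X, Y) => g x) Φ ≤ nhds (f x)) :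
    ∀ x : X,
      Filter.map (fun p : X × C(X, Y) => p.2 p.1) (nhds x ×ˢ Φ) ≤ nhds (f x) := by
  intro x
  have hreg : (𝓝 (0 : Y)).HasBasis (fun s : Set Y => s ∈ 𝓝 (0 : Y) ∧ IsClosed s) id :=
    closed_nhds_basis 0
  have key : Filter.Tendsto (fun p : X × C(X, Y) => p.2 p.1 - f p.1) (𝓝 x ×ˢ Φ) (𝓝 0) := by
    rw [hreg.tendsto_right_iff]
    rintro C ⟨hC, hCc⟩
    have hmem : {q : X × (C(X, Y) × C(X, Y)) | q.2.1 q.1 - q.2.2 q.1 ∈ C} ∈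
        𝓝 x ×ˢ (Φ ×ˢ Φ) := hΦ x hC
    rw [Filter.mem_prod_iff] at hmem
    obtain ⟨S, hS, T, hT, hST⟩ := hmem
    rw [Filter.mem_prod_iff] at hT
    obtain ⟨A, hA, B, hB, hAB⟩ := hT
    filter_upwards [Filter.prod_mem_prod hS hA] with p hp
    obtain ⟨hp1, hp2⟩ := hp
    have hne : (Φ ⊓ Filter.principal B).NeBot := Filter.inf_principal_neBot_iff.mpr
      (fun s hs => Filter.nonempty_of_mem (Filter.inter_mem hB hs) |>.imp
        (fun a ha => ⟨ha.2, ha.1⟩))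
    have htd : Filter.Tendsto (fun h : C(X, Y) => p.2 p.1 - h p.1)
        (Φ ⊓ Filter.principal B) (𝓝 (p.2 p.1 - f p.1)) := by
      have : Filter.Tendsto (fun h : C(X, Y) => h p.1) (Φ ⊓ Filter.principal B)
          (𝓝 (f p.1)) :=
        Filter.Tendsto.mono_left (hlim p.1) inf_le_left
      exact Filter.Tendsto.const_sub _ this
    refine hCc.mem_of_tendsto htd ?_
    filter_upwards [Filter.mem_inf_of_right (Filter.mem_principal_self B)] with h hhB
    exact hST (show (p.1, (p.2, h)) ∈ S ×ˢ T from ⟨hp1, hAB ⟨hp2, hhB⟩⟩)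
  have hfx : Filter.Tendsto (fun p : X × C(X, Y) => f p.1) (𝓝 x ×ˢ Φ) (𝓝 (f x)) :=
    (hf.tendsto x).comp Filter.tendsto_fst
  have := key.add hfx
  simp only [sub_add_cancel, zero_add] at this
  exact this
end
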